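/- For every real z ≥ 1 and every positive integer a, one has ∑_{n ≤ z} μ(n)²/φ(n) ≤ (a/φ(a)) · ∑_{m ≤ z, gcd(m,a)=1} μ(m)²/φ(m). -/

import Mathlib

open ArithmeticFunction Finset
open ArithmeticFunction.Moebius ArithmeticFunction.zeta

/-- The arithmetic function `n ↦ μ(n)² / φ(n)` (real-valued). -/
noncomputable def muSqDivPhi : ArithmeticFunction ℝ :=
  ⟨fun n => ((μ n : ℝ)) ^ 2 / (Nat.totient n), by simp⟩

lemma muSqDivPhi_apply (n : ℕ) : muSqDivPhi n = ((μ n : ℝ)) ^ 2 / (Nat.totient n) := rfl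

lemma muSqDivPhi_nonneg (n : ℕ) : 0 ≤ muSqDivPhi n := by
  rw [muSqDivPhi_apply]
  positivity

lemma muSqDivPhi_mult : muSqDivPhi.IsMultiplicative := by
  refine ⟨by simp [muSqDivPhi_apply], ?_⟩
  intro m n h
  simp only [muSqDivPhi_apply]
  rw [isMultiplicative_moebius.map_mul_of_coprime h, Nat.totient_mul h]
  push_cast
  rw [mul_pow, mul_div_mul_comm]

/-- The arithmetic function `n ↦ n / φ(n)` (real-valued). -/
noncomputable def selfDivPhi : ArithmeticFunction ℝ :=
  ⟨fun n => (n : ℝ) / (Nat.totient n), by simp⟩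

lemma selfDivPhi_apply (n : ℕ) : selfDivPhi n = (n : ℝ) / (Nat.totient n) := rfl

lemma selfDivPhi_mult : selfDivPhi.IsMultiplicative := by
  refine ⟨by simp [selfDivPhi_apply], ?_⟩
  intro m n h
  rcases eq_or_ne m 0 with rfl | hm
  · obtain rfl : n = 1 := by simpa using h
    simp [selfDivPhi_apply]
  rcases eq_or_ne n 0 with rfl | hn
  · obtain rfl : m = 1 := by simpa [Nat.coprime_zero_right] using h
    simp [selfDivPhi_apply]
  simp only [selfDivPhi_apply]
  rw [Nat.totient_mul h]
  push_cast
  rw [mul_div_mul_comm]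

lemma sum_divisors_muSqDivPhi (a : ℕ) (ha : 0 < a) :
    ∑ d ∈ a.divisors, muSqDivPhi d = (a : ℝ) / (Nat.totient a) := by
  have key : (↑(ζ : ArithmeticFunction ℕ) * muSqDivPhi) = selfDivPhi := by
    rw [ArithmeticFunction.IsMultiplicative.eq_iff_eq_on_prime_powers _
      (isMultiplicative_zeta.natCast.mul muSqDivPhi_mult) _ selfDivPhi_mult]
    intro p k hp
    have hp1 : (1 : ℝ) < p := by exact_mod_cast hp.one_lt
    have hpm1 : (0 : ℝ) < (p : ℝ) - 1 := by linarith
    rw [coe_zeta_mul_apply, Nat.sum_divisors_prime_pow hp]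
    rcases Nat.eq_zero_or_pos k with rfl | hk
    · simp [muSqDivPhi_apply, selfDivPhi_apply]
    -- each term for i ≥ 2 vanishes; compute the sum by induction
    have hterm : ∀ i : ℕ, 2 ≤ i → muSqDivPhi (p ^ i) = 0 := by
      intro i hi
      rw [muSqDivPhi_apply, moebius_apply_prime_pow hp (by omega)]
      rw [if_neg (by omega)]
      simp
    have hsum : ∀ j : ℕ, 1 ≤ j → ∑ i ∈ range (j + 1), muSqDivPhi (p ^ i)
        = 1 + 1 / ((p : ℝ) - 1) := by
      intro j hj
      induction j with
      | zero => omega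
      | succ m ih =>
        rcases Nat.eq_zero_or_pos m with rfl | hm
        · rw [Finset.sum_range_succ, Finset.sum_range_one]
          have h0 : muSqDivPhi (p ^ 0) = 1 := by simp [muSqDivPhi_apply]
          have h1 : muSqDivPhi (p ^ 1) = 1 / ((p : ℝ) - 1) := by
            rw [muSqDivPhi_apply, pow_one, moebius_apply_prime hp, Nat.totient_prime hp]
            push_cast [hp.one_le]
            norm_num
          rw [h0, h1]
        · rw [Finset.sum_range_succ, ih hm, hterm _ (by omega), add_zero]
    rw [hsum k hk, selfDivPhi_apply, Nat.totient_prime_pow hp hk]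
    have hpe : p ^ k = p ^ (k - 1) * p := by
      rw [← pow_succ]
      congr 1
      omega
    rw [hpe]
    push_cast [hp.one_le]
    have hpk : (0 : ℝ) < (p : ℝ) ^ (k - 1) := by positivity
    field_simp
    ring
  calc ∑ d ∈ a.divisors, muSqDivPhi d
      = (↑(ζ : ArithmeticFunction ℕ) * muSqDivPhi) a := coe_zeta_mul_apply.symm
    _ = selfDivPhi a := by rw [key]
    _ = (a : ℝ) / (Nat.totient a) := selfDivPhi_apply a

open ArithmeticFunction ArithmeticFunction.Moebius in
theorem sum_le_coprime_sum (z : ℝ) (hz : 1 ≤ z) (a : ℕ) (ha : 0 < a) :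
    ∑ n ∈ Finset.Icc 1 ⌊z⌋₊, ((μ n : ℝ)) ^ 2 / (Nat.totient n) ≤
      ((a : ℝ) / Nat.totient a) *
        ∑ m ∈ (Finset.Icc 1 ⌊z⌋₊).filter (fun m => Nat.Coprime m a),
          ((μ m : ℝ)) ^ 2 / (Nat.totient m) := by
  set N := ⌊z⌋₊ with hN
  set S : Finset ℕ := Finset.Icc 1 N with hS
  set T : Finset ℕ := S.filter (fun m => Nat.Coprime m a) with hT
  set s : Finset ℕ := S.filter Squarefree with hs
  have ha0 : a ≠ 0 := ha.ne'
  -- the decomposition map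
  set e : ℕ → ℕ × ℕ := fun n => (n.gcd a, n / n.gcd a) with he
  have hprop : ∀ n ∈ s, n.gcd a ∣ a ∧ n.gcd a ∣ n ∧ n.gcd a * (n / n.gcd a) = n ∧
      Nat.Coprime (n / n.gcd a) a := by
    intro n hn
    simp only [hs, Finset.mem_filter, hS, Finset.mem_Icc] at hn
    obtain ⟨⟨hn1, hnN⟩, hsq⟩ := hn
    refine ⟨Nat.gcd_dvd_right _ _, Nat.gcd_dvd_left _ _, Nat.mul_div_cancel' (Nat.gcd_dvd_left _ _), ?_⟩
    exact Nat.coprime_div_gcd_of_squarefree hsq ha0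
  -- Step 1: restrict to squarefree n
  have step1 : ∑ n ∈ S, ((μ n : ℝ)) ^ 2 / (Nat.totient n) = ∑ n ∈ s, muSqDivPhi n := by
    rw [Finset.sum_congr rfl (fun n _ => (muSqDivPhi_apply n).symm)]
    refine (Finset.sum_subset (Finset.filter_subset _ _) ?_).symm
    intro n _ hns
    simp only [hs, Finset.mem_filter] at hns
    have hsq : ¬ Squarefree n := by
      intro h
      exact hns ⟨by assumption, h⟩
    rw [muSqDivPhi_apply, moebius_eq_zero_of_not_squarefree hsq]
    simp
  -- Step 2: compare with the sum over the product set
  have step2 : ∑ n ∈ s, muSqDivPhi n ≤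
      ∑ p ∈ a.divisors ×ˢ T, muSqDivPhi p.1 * muSqDivPhi p.2 := by
    have hinj : ∀ x ∈ s, ∀ y ∈ s, e x = e y → x = y := by
      intro x hx y hy hxy
      obtain ⟨_, _, hx3, _⟩ := hprop x hx
      obtain ⟨_, _, hy3, _⟩ := hprop y hy
      have h1 : (e x).1 = (e y).1 := by rw [hxy]
      have h2 : (e x).2 = (e y).2 := by rw [hxy]
      simp only [he] at h1 h2
      calc x = x.gcd a * (x / x.gcd a) := hx3.symm
        _ = y.gcd a * (y / y.gcd a) := by rw [h2, h1]
        _ = y := hy3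
    calc ∑ n ∈ s, muSqDivPhi n
        = ∑ n ∈ s, muSqDivPhi (e n).1 * muSqDivPhi (e n).2 := by
          refine Finset.sum_congr rfl ?_
          intro n hn
          obtain ⟨hda, hdn, hdm, hma⟩ := hprop n hn
          simp only [hs, Finset.mem_filter] at hn
          have hsq : Squarefree n := hn.2
          have hsq' : Squarefree ((n.gcd a) * (n / n.gcd a)) := by rwa [hdm]
          have hco : Nat.Coprime (n.gcd a) (n / n.gcd a) :=
            (Nat.squarefree_mul_iff.mp hsq').1
          simp only [he]
          rw [← muSqDivPhi_mult.map_mul_of_coprime hco, hdm]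
      _ = ∑ p ∈ s.image e, muSqDivPhi p.1 * muSqDivPhi p.2 := by
          rw [Finset.sum_image hinj]
      _ ≤ ∑ p ∈ a.divisors ×ˢ T, muSqDivPhi p.1 * muSqDivPhi p.2 := by
          refine Finset.sum_le_sum_of_subset_of_nonneg ?_ ?_
          · intro p hp
            simp only [Finset.mem_image] at hp
            obtain ⟨n, hn, rfl⟩ := hp
            obtain ⟨hda, hdn, hdm, hma⟩ := hprop n hn
            simp only [hs, Finset.mem_filter, hS, Finset.mem_Icc] at hn
            obtain ⟨⟨hn1, hnN⟩, hsq⟩ := hn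
            have hn0 : n ≠ 0 := by omega
            have hm0 : n / n.gcd a ≠ 0 := by
              intro h0
              rw [h0, mul_zero] at hdm
              exact hn0 hdm.symm
            have hmdvd : n / n.gcd a ∣ n := Nat.div_dvd_of_dvd hdn
            have hmN : n / n.gcd a ≤ N := le_trans (Nat.le_of_dvd (by omega) hmdvd) hnN
            simp only [Finset.mem_product, Nat.mem_divisors, hT, Finset.mem_filter, hS,
              Finset.mem_Icc, he]
            exact ⟨⟨hda, ha0⟩, ⟨Nat.one_le_iff_ne_zero.mpr hm0, hmN⟩, hma⟩
          · intro p _ _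
            exact mul_nonneg (muSqDivPhi_nonneg _) (muSqDivPhi_nonneg _)
  -- Step 3: factor the product sum
  have step3 : ∑ p ∈ a.divisors ×ˢ T, muSqDivPhi p.1 * muSqDivPhi p.2
      = (∑ d ∈ a.divisors, muSqDivPhi d) * ∑ m ∈ T, muSqDivPhi m := by
    rw [Finset.sum_mul_sum]
    rw [Finset.sum_product]
  rw [step1]
  refine le_trans step2 ?_
  rw [step3, sum_divisors_muSqDivPhi a ha]
  have hTsum : ∑ m ∈ T, muSqDivPhi m
      = ∑ m ∈ T, ((μ m : ℝ)) ^ 2 / (Nat.totient m) :=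
    Finset.sum_congr rfl fun m _ => muSqDivPhi_apply m
  rw [hTsum]
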